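/- arXiv:2106.15500 — 7 statements merged into one kernel-verified Lean document; each statement's English description precedes it below -/
import Mathlib

section
/- Let Γ be a simplicial graph and let u be a vertex of Γ. Then Γ is fine at u if and only if for every integer k > 0 and every vertex v of Γ, the set uv→(k)_Γ is finite. -/
open SimpleGraph
/-- The graph `Γ` with the vertex `v` deleted (kept as an isolated vertex). -/
def deleteVert {V : Type*} (Γ : SimpleGraph V) (v : V) : SimpleGraph V where
  Adj x y := Γ.Adj x y ∧ x ≠ v ∧ y ≠ v
  symm := ⟨fun x y ⟨h, hx, hy⟩ => ⟨h.symm, hy, hx⟩⟩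
  loopless := ⟨fun x ⟨h, _, _⟩ => Γ.loopless.irrefl x h⟩

/-- The angle metric `∠_v(x,y)`: length of a shortest path from `x` to `y` in `Γ - v`,
with value `∞` if there is no such path. -/
noncomputable def angle {V : Type*} (Γ : SimpleGraph V) (v x y : V) : ℕ∞ :=
  (deleteVert Γ v).edist x y

/-- `Γ` is fine at `v`: every ball of finite radius in `(T_vΓ, ∠_v)` is finite. -/
def FineAt {V : Type*} (Γ : SimpleGraph V) (v : V) : Prop :=
  ∀ x ∈ Γ.neighborSet v, ∀ n : ℕ,
    {y ∈ Γ.neighborSet v | angle Γ v x y ≤ (n : ℕ∞)}.Finite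

/-- The set `uv→(k)_Γ` of vertices `w` adjacent to `u` that belong to some escaping path
from `u` to `v` of length at most `k`.  An escaping path from `u` to `v` is an edge-path
`[u, u₁, …, uₙ]` with `v = uᵢ` for some `i ≥ 1` and `uᵢ ≠ u` for all `i ≥ 1`. -/
def escSet {V : Type*} (Γ : SimpleGraph V) (u v : V) (k : ℕ) : Set V :=
  {w | w ∈ Γ.neighborSet u ∧ ∃ (x : V) (p : Γ.Walk u x),
      p.length ≤ k ∧ v ∈ p.support.tail ∧ u ∉ p.support.tail ∧ w ∈ p.support}

/-- A walk avoiding `u` transfers to `deleteVert Γ u`. -/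
lemma edges_mem_deleteVert {V : Type*} {Γ : SimpleGraph V} {u a b : V}
    (p : Γ.Walk a b) (hu : u ∉ p.support) :
    ∀ e ∈ p.edges, e ∈ (deleteVert Γ u).edgeSet := by
  intro e he
  induction e with
  | _ x y =>
    exact ⟨p.adj_of_mem_edges he,
      fun h => hu (h ▸ p.fst_mem_support_of_mem_edges he),
      fun h => hu (h ▸ p.snd_mem_support_of_mem_edges he)⟩

lemma edist_deleteVert_le {V : Type*} {Γ : SimpleGraph V} {u a b : V}
    (p : Γ.Walk a b) (hu : u ∉ p.support) :
    (deleteVert Γ u).edist a b ≤ p.length := by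
  have := SimpleGraph.edist_le (p.transfer (deleteVert Γ u) (edges_mem_deleteVert p hu))
  rwa [SimpleGraph.Walk.length_transfer] at this

lemma not_mem_support_deleteVert {V : Type*} {Γ : SimpleGraph V} {u a b : V}
    (q : (deleteVert Γ u).Walk a b) (ha : a ≠ u) : u ∉ q.support := by
  induction q with
  | nil => simpa using ha.symm
  | cons h q ih =>
    simp only [SimpleGraph.Walk.support_cons, List.mem_cons, not_or]
    exact ⟨Ne.symm (by exact h.2.1), ih (by exact h.2.2)⟩

theorem statement0 {V : Type*} (Γ : SimpleGraph V) (u : V) :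
    FineAt Γ u ↔ ∀ k : ℕ, 0 < k → ∀ v : V, (escSet Γ u v k).Finite := by
  classical
  constructor
  · intro hfine k hk v
    rcases Set.eq_empty_or_nonempty (escSet Γ u v k) with he | ⟨w₀, hw₀⟩
    · simp [he]
    obtain ⟨hw₀u, x₀, p₀, hlen₀, hv₀, hu₀, -⟩ := hw₀
    cases p₀ with
    | nil => simp at hv₀
    | cons h₀ q₀ =>
      rename_i a₀
      simp only [SimpleGraph.Walk.support_cons, List.tail_cons] at hv₀ hu₀
      simp only [SimpleGraph.Walk.length_cons] at hlen₀
      -- base point a₀, with edist a₀ v ≤ k in deleteVert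
      have hbase : (deleteVert Γ u).edist a₀ v ≤ (k : ℕ∞) := by
        refine le_trans (edist_deleteVert_le (q₀.takeUntil v hv₀)
          (fun hmem => hu₀ (q₀.support_takeUntil_subset hv₀ hmem))) ?_
        have h1 := q₀.length_takeUntil_le hv₀
        exact_mod_cast (by omega : (q₀.takeUntil v hv₀).length ≤ k)
      apply (hfine a₀ h₀ (3 * k)).subset
      rintro w ⟨hwu, x, p, hlen, hv, hu', hw⟩
      cases p with
      | nil => simp at hv
      | cons h q =>
        rename_i a
        simp only [SimpleGraph.Walk.support_cons, List.tail_cons] at hv hu'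
        simp only [SimpleGraph.Walk.length_cons] at hlen
        have hwne : w ≠ u := (Γ.ne_of_adj hwu).symm
        have hwq : w ∈ q.support := by
          rcases List.mem_cons.mp (SimpleGraph.Walk.support_cons h q ▸ hw : w ∈ u :: q.support)
            with h' | h'
          · exact absurd h' hwne
          · exact h'
        have hav : (deleteVert Γ u).edist a v ≤ (k : ℕ∞) := by
          refine le_trans (edist_deleteVert_le (q.takeUntil v hv)
            (fun hmem => hu' (q.support_takeUntil_subset hv hmem))) ?_
          have h1 := q.length_takeUntil_le hv
          exact_mod_cast (by omega : (q.takeUntil v hv).length ≤ k)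
        have haw : (deleteVert Γ u).edist a w ≤ (k : ℕ∞) := by
          refine le_trans (edist_deleteVert_le (q.takeUntil w hwq)
            (fun hmem => hu' (q.support_takeUntil_subset hwq hmem))) ?_
          have h1 := q.length_takeUntil_le hwq
          exact_mod_cast (by omega : (q.takeUntil w hwq).length ≤ k)
        refine ⟨hwu, ?_⟩
        have tri : (deleteVert Γ u).edist a₀ w ≤
            (deleteVert Γ u).edist a₀ v + ((deleteVert Γ u).edist v a
              + (deleteVert Γ u).edist a w) :=
          le_trans (SimpleGraph.edist_triangle (v := v)) (by
            gcongr
            exact SimpleGraph.edist_triangle (v := a))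
        calc angle Γ u a₀ w ≤ (k : ℕ∞) + ((k : ℕ∞) + (k : ℕ∞)) := by
              refine le_trans tri ?_
              gcongr
              rwa [SimpleGraph.edist_comm]
          _ ≤ ((3 * k : ℕ) : ℕ∞) := by
              push_cast; ring_nf; rfl
  · intro hesc x hx n
    apply (hesc (n + 1) (by omega) x).subset
    rintro y ⟨hy, hangle⟩
    refine ⟨hy, ?_⟩
    have hne : (deleteVert Γ u).edist x y ≠ ⊤ :=
      fun h => by simp [angle, h] at hangle
    obtain ⟨q, hq⟩ := SimpleGraph.exists_walk_of_edist_ne_top hne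
    have hqlen : (q.length : ℕ∞) ≤ (n : ℕ∞) := by rw [hq]; exact hangle
    have hqlen' : q.length ≤ n := by exact_mod_cast hqlen
    have hxu : x ≠ u := (Γ.ne_of_adj hx).symm
    have huq : u ∉ q.support := not_mem_support_deleteVert q hxu
    have hsub : ∀ e ∈ q.edges, e ∈ Γ.edgeSet := by
      intro e he
      induction e with
      | _ a b => exact (q.adj_of_mem_edges he).1
    refine ⟨y, SimpleGraph.Walk.cons ((Γ.mem_neighborSet u x).mp hx) (q.transfer Γ hsub), ?_, ?_, ?_, ?_⟩
    · simp only [SimpleGraph.Walk.length_cons, SimpleGraph.Walk.length_transfer]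
      omega
    · simp only [SimpleGraph.Walk.support_cons, List.tail_cons,
        SimpleGraph.Walk.support_transfer]
      exact q.start_mem_support
    · simp only [SimpleGraph.Walk.support_cons, List.tail_cons,
        SimpleGraph.Walk.support_transfer]
      exact huq
    · exact SimpleGraph.Walk.end_mem_support _
end

section
/- Let Γ be a simplicial graph, let u, v be vertices of Γ, let k > 0 be an integer, and let w ∈ uv→(k)_Γ. Then every element z of uv→(k)_Γ satisfies ∠_u(w,z) ≤ 2k − 2; that is, uv→(k)_Γ is contained in the closed ball of radius 2k − 2 centered at w in (T_uΓ, ∠_u). -/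
open SimpleGraph
/-- Transfer a walk avoiding `u` into `deleteVert Γ u`. -/
lemma edist_delete_le {V : Type*} {Γ : SimpleGraph V} {u a x : V}
    (p : Γ.Walk a x) (hu : u ∉ p.support) :
    (deleteVert Γ u).edist a x ≤ (p.length : ℕ∞) := by
  have hedges : ∀ e ∈ p.edges, e ∈ (deleteVert Γ u).edgeSet := by
    intro e he
    induction e using Sym2.ind with
    | _ a b =>
      refine (show Γ.Adj a b ∧ a ≠ u ∧ b ≠ u from ⟨p.adj_of_mem_edges he, ?_, ?_⟩)
      · rintro rfl; exact hu (p.fst_mem_support_of_mem_edges he)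
      · rintro rfl; exact hu (p.snd_mem_support_of_mem_edges he)
  have := SimpleGraph.edist_le (p.transfer (deleteVert Γ u) hedges)
  rwa [Walk.length_transfer] at this

/-- If `a, b` lie on a walk avoiding `u`, their `deleteVert` edist is at most its length. -/
lemma edist_delete_le_of_mem {V : Type*} {Γ : SimpleGraph V} {u s x a b : V}
    (p : Γ.Walk s x) (hu : u ∉ p.support) (ha : a ∈ p.support) (hb : b ∈ p.support) :
    (deleteVert Γ u).edist a b ≤ (p.length : ℕ∞) := by
  classical
  by_cases hb' : b ∈ (p.dropUntil a ha).support
  · have h1 := edist_delete_le ((p.dropUntil a ha).takeUntil b hb')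
      (fun h => hu (p.support_dropUntil_subset ha ((p.dropUntil a ha).support_takeUntil_subset hb' h)))
    refine h1.trans ?_
    exact_mod_cast le_trans ((p.dropUntil a ha).length_takeUntil_le hb') (p.length_dropUntil_le ha)
  · have hb'' : b ∈ (p.takeUntil a ha).support := by
      have := p.take_spec ha
      rw [← this, Walk.mem_support_append_iff] at hb
      tauto
    have h1 := edist_delete_le ((p.takeUntil a ha).dropUntil b hb'')
      (fun h => hu (p.support_takeUntil_subset ha ((p.takeUntil a ha).support_dropUntil_subset hb'' h)))
    rw [SimpleGraph.edist_comm]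
    refine h1.trans ?_
    exact_mod_cast le_trans ((p.takeUntil a ha).length_dropUntil_le hb'') (p.length_takeUntil_le ha)

lemma esc_edist {V : Type*} {Γ : SimpleGraph V} {u v : V} {k : ℕ}
    {w : V} (hw : w ∈ escSet Γ u v k) :
    (deleteVert Γ u).edist w v ≤ ((k - 1 : ℕ) : ℕ∞) := by
  obtain ⟨hadj, x, p, hlen, hv, hu, hws⟩ := hw
  cases p with
  | nil => simp at hv
  | cons h p' =>
    simp only [Walk.support_cons, List.tail_cons] at hv hu
    have hwne : w ≠ u := (Γ.ne_of_adj hadj).symm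
    have hws' : w ∈ p'.support := by
      rcases List.mem_cons.mp (by simpa using hws) with h | h
      · exact absurd h hwne
      · exact h
    have := edist_delete_le_of_mem p' hu hws' hv
    refine this.trans ?_
    have : p'.length ≤ k - 1 := by
      simp only [Walk.length_cons] at hlen; omega
    exact_mod_cast this

theorem statement1 {V : Type*} (Γ : SimpleGraph V) (u v : V) (k : ℕ) (hk : 0 < k)
    (w : V) (hw : w ∈ escSet Γ u v k) :
    ∀ z ∈ escSet Γ u v k, angle Γ u w z ≤ ((2 * k - 2 : ℕ) : ℕ∞) := by
  intro z hz
  have h1 := esc_edist hw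
  have h2 := esc_edist hz
  rw [SimpleGraph.edist_comm] at h2
  calc angle Γ u w z ≤ (deleteVert Γ u).edist w v + (deleteVert Γ u).edist v z :=
        SimpleGraph.edist_triangle
    _ ≤ ((k - 1 : ℕ) : ℕ∞) + ((k - 1 : ℕ) : ℕ∞) := add_le_add h1 h2
    _ = ((2 * k - 2 : ℕ) : ℕ∞) := by
        rw [← Nat.cast_add]; congr 1; omega
end

section
/- Let Γ be a connected G-graph with finite edge stabilizers, and suppose Γ is fine at a vertex u. Then for every vertex v of Γ, either the subgroup G_u ∩ G_v is finite or u = v. -/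
open SimpleGraph
/-- A walk avoiding `u` gives a bound on the angle metric. -/
lemma angle_le_of_walk {V : Type*} {Γ : SimpleGraph V} {u a b : V} (q : Γ.Walk a b)
    (h : ∀ x ∈ q.support, x ≠ u) : (deleteVert Γ u).edist a b ≤ q.length := by
  have hedges : ∀ e ∈ q.edges, e ∈ (deleteVert Γ u).edgeSet := by
    intro e he
    induction e using Sym2.ind with
    | _ x y =>
      refine ⟨q.edges_subset_edgeSet he, ?_, ?_⟩
      · exact h x (q.fst_mem_support_of_mem_edges he)
      · exact h y (q.snd_mem_support_of_mem_edges he)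
  calc (deleteVert Γ u).edist a b ≤ (q.transfer _ hedges).length :=
        SimpleGraph.Walk.edist_le _
    _ = q.length := by simp

theorem statement3 {V G : Type*} [Group G] [MulAction G V] (Γ : SimpleGraph V)
    (hconn : Γ.Connected)
    (hact : ∀ (g : G) (x y : V), Γ.Adj x y → Γ.Adj (g • x) (g • y))
    (hedge : ∀ x y : V, Γ.Adj x y →
      ({g : G | (g • x = x ∧ g • y = y) ∨ (g • x = y ∧ g • y = x)} : Set G).Finite)
    (u : V) (hfine : FineAt Γ u) :
    ∀ v : V, ({g : G | g • u = u ∧ g • v = v} : Set G).Finite ∨ u = v := by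
  classical
  intro v
  by_cases huv : u = v
  · exact Or.inr huv
  left
  obtain ⟨p0⟩ := hconn.preconnected u v
  obtain ⟨p, hp⟩ := p0.toPath
  clear p0
  cases p with
  | nil => exact absurd rfl huv
  | @cons _ w _ hadj q =>
    rw [SimpleGraph.Walk.cons_isPath_iff] at hp
    obtain ⟨hqpath, hunotin⟩ := hp
    -- the hom induced by g
    let φ : G → (Γ →g Γ) := fun g => ⟨fun x => g • x, fun h => hact g _ _ h⟩
    -- the set H
    set H : Set G := {g : G | g • u = u ∧ g • v = v} with hH
    -- for g ∈ H, the angle bound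
    have hangle : ∀ g ∈ H, angle Γ u w (g • w) ≤ ((q.length + q.length : ℕ) : ℕ∞) := by
      intro g hg
      obtain ⟨hgu, hgv⟩ := hg
      have hginvu : g⁻¹ • u = u := inv_smul_eq_iff.mpr hgu.symm
      set Q : Γ.Walk w (g • w) := q.append ((q.map (φ g)).copy rfl hgv).reverse with hQ
      have hsup : ∀ x ∈ Q.support, x ≠ u := by
        intro x hx
        rw [hQ, SimpleGraph.Walk.mem_support_append_iff] at hx
        rcases hx with hx | hx
        · exact fun h => hunotin (h ▸ hx)
        · rw [SimpleGraph.Walk.support_reverse, List.mem_reverse,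
            SimpleGraph.Walk.support_copy, SimpleGraph.Walk.support_map, List.mem_map] at hx
          obtain ⟨y, hy, hxy⟩ := hx
          intro hxu
          apply hunotin
          have h1 : g • y = u := hxy.trans hxu
          have h2 : y = u := by
            have : y = g⁻¹ • u := by rw [← h1, inv_smul_smul]
            rwa [hginvu] at this
          exact h2 ▸ hy
      have := angle_le_of_walk Q hsup
      have hlen : Q.length = q.length + q.length := by
        rw [hQ, SimpleGraph.Walk.length_append, SimpleGraph.Walk.length_reverse,
          SimpleGraph.Walk.length_copy, SimpleGraph.Walk.length_map]
      rw [hlen] at this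
      exact_mod_cast this
    -- g • w is a neighbor of u for g ∈ H
    have hnbr : ∀ g ∈ H, g • w ∈ Γ.neighborSet u := by
      intro g hg
      have := hact g u w hadj
      rwa [hg.1] at this
    -- the image of H under (· • w) is finite
    have himg : ((fun g : G => g • w) '' H).Finite := by
      apply (hfine w hadj (q.length + q.length)).subset
      rintro y ⟨g, hg, rfl⟩
      exact ⟨hnbr g hg, by exact_mod_cast hangle g hg⟩
    -- fibers are finite
    have hfiber : ∀ y : V, ({g : G | g • u = u ∧ g • w = y} : Set G).Finite := by
      intro y
      rcases Set.eq_empty_or_nonempty {g : G | g • u = u ∧ g • w = y} with he | ⟨g₀, hg₀u, hg₀w⟩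
      · simp [he]
      · have hK := hedge u w hadj
        apply ((hK.image (fun h => g₀ * h))).subset
        intro g hg
        refine ⟨g₀⁻¹ * g, Or.inl ⟨?_, ?_⟩, by group⟩
        · rw [mul_smul, hg.1, inv_smul_eq_iff.mpr hg₀u.symm]
        · rw [mul_smul, hg.2, ← hg₀w, inv_smul_smul]
    -- conclude
    apply (himg.biUnion (fun y _ => hfiber y)).subset
    intro g hg
    exact Set.mem_biUnion ⟨g, hg, rfl⟩ ⟨hg.1, rfl⟩
end

section
/- Let Γ be a connected G-graph with finite edge stabilizers, let u, v be distinct vertices of Γ with {u,v} ∉ E(Γ), and let Γ' be the G-graph obtained from Γ by attaching the G-orbit of edges with representative {u,v}. If a is a vertex such that Γ is fine at a, then Γ' is fine at a. -/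
open SimpleGraph
/-- The `G`-graph obtained from `Γ` by attaching the `G`-orbit of edges with
representative `{u,v}`. -/
def attachOrbit {V : Type*} (Γ : SimpleGraph V) (G : Type*) [Group G] [MulAction G V]
    (u v : V) (huv : u ≠ v) : SimpleGraph V where
  Adj x y := Γ.Adj x y ∨ ∃ g : G, (g • u = x ∧ g • v = y) ∨ (g • v = x ∧ g • u = y)
  symm := by
    constructor
    rintro x y (h | ⟨g, hg⟩)
    · exact Or.inl h.symm
    · refine Or.inr ⟨g, ?_⟩
      rcases hg with ⟨h1, h2⟩ | ⟨h1, h2⟩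
      · exact Or.inr ⟨h2, h1⟩
      · exact Or.inl ⟨h2, h1⟩
  loopless := by
    constructor
    rintro x (h | ⟨g, ⟨h1, h2⟩ | ⟨h1, h2⟩⟩)
    · exact Γ.loopless.irrefl x h
    · exact huv (smul_left_cancel g (h1.trans h2.symm))
    · exact huv (smul_left_cancel g (h2.trans h1.symm))


lemma deleteVert_adj {V : Type*} {Γ : SimpleGraph V} {b x y : V} :
    (deleteVert Γ b).Adj x y ↔ Γ.Adj x y ∧ x ≠ b ∧ y ≠ b := Iff.rfl

namespace FineAux

variable {V : Type*}

lemma exists_walk_del (Γ : SimpleGraph V) (b : V) :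
    ∀ {s t : V} (w : Γ.Walk s t), b ∉ w.support →
    ∃ w' : (deleteVert Γ b).Walk s t, w'.length = w.length := by
  intro s t w
  induction w with
  | nil => exact fun _ => ⟨.nil, rfl⟩
  | @cons s c t h p ih =>
    intro hb
    rw [SimpleGraph.Walk.support_cons] at hb
    have hbs : b ≠ s := fun h' => hb (h' ▸ List.mem_cons_self ..)
    have hbp : b ∉ p.support := fun h' => hb (List.mem_cons_of_mem _ h')
    have hbc : c ≠ b := fun h' => hbp (h' ▸ p.start_mem_support)
    obtain ⟨w', hw'⟩ := ih hbp
    exact ⟨.cons (show (deleteVert Γ b).Adj s c from ⟨h, hbs.symm, hbc⟩) w', by simp [hw']⟩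

lemma edist_del_le (Γ : SimpleGraph V) (b : V) {s t : V} (w : Γ.Walk s t)
    (hb : b ∉ w.support) : (deleteVert Γ b).edist s t ≤ (w.length : ℕ∞) := by
  obtain ⟨w', hw'⟩ := exists_walk_del Γ b w hb
  simpa [hw'] using SimpleGraph.edist_le w'

lemma first_hit (Γ : SimpleGraph V) {s t : V} (w : Γ.Walk s t) (b : V)
    (hb : b ∈ w.support) (hs : s ≠ b) :
    ∃ q, Γ.Adj q b ∧ s(q, b) ∈ w.edges ∧ q ∈ w.support ∧
      (deleteVert Γ b).edist s q ≤ (w.length : ℕ∞) := by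
  classical
  set W := w.takeUntil b hb with hWdef
  have hcount : W.support.count b = 1 := w.count_support_takeUntil_eq_one hb
  obtain ⟨q, hadj, W', hWr⟩ := SimpleGraph.Walk.exists_eq_cons_of_ne (Ne.symm hs) W.reverse
  have hedge : s(q, b) ∈ w.edges := by
    have h1 : s(b, q) ∈ W.reverse.edges := by rw [hWr]; simp
    rw [SimpleGraph.Walk.edges_reverse, List.mem_reverse] at h1
    exact SimpleGraph.Walk.edges_takeUntil_subset _ _ (Sym2.eq_swap ▸ h1)
  have hq : q ∈ w.support := by
    have h2 : q ∈ W.reverse.support := by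
      rw [hWr, SimpleGraph.Walk.support_cons]
      exact List.mem_cons_of_mem _ W'.start_mem_support
    rw [SimpleGraph.Walk.support_reverse, List.mem_reverse] at h2
    exact SimpleGraph.Walk.support_takeUntil_subset _ _ h2
  have hbW' : b ∉ W'.support := by
    have h3 : (b :: W'.support).count b = 1 := by
      rw [← SimpleGraph.Walk.support_cons hadj, ← hWr, SimpleGraph.Walk.support_reverse,
        List.count_reverse, hcount]
    rw [List.count_cons_self] at h3
    exact List.count_eq_zero.mp (by omega)
  have hbr : b ∉ W'.reverse.support := by
    rwa [SimpleGraph.Walk.support_reverse, List.mem_reverse]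
  have hlen : W'.reverse.length ≤ w.length := by
    have h4 : W'.length + 1 = W.length := by
      have := congrArg SimpleGraph.Walk.length hWr
      rw [SimpleGraph.Walk.length_reverse] at this
      simp [SimpleGraph.Walk.length_cons] at this
      omega
    have h5 := SimpleGraph.Walk.length_takeUntil_le w hb
    rw [← hWdef] at h5
    rw [SimpleGraph.Walk.length_reverse]
    omega
  refine ⟨q, hadj.symm, hedge, hq, ?_⟩
  exact (edist_del_le Γ b W'.reverse hbr).trans (by exact_mod_cast hlen)

end FineAux

namespace FineAux

variable {V : Type*} {G : Type*} [Group G] [MulAction G V]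

/-- `p` is reachable from `q` "across `a`" through a translate of `γ`. -/
def crossRel (Γ : SimpleGraph V) (G : Type*) [Group G] [MulAction G V] (a : V) {u v : V}
    (γ : Γ.Walk u v) (q p : V) : Prop :=
  ∃ (h : G) (e : Sym2 V), e ∈ γ.edges ∧ Sym2.map (h • ·) e = s(q, a) ∧
    (∃ z ∈ γ.support, h • z = p) ∧ Γ.Adj a p

def uturnSet (Γ : SimpleGraph V) (G : Type*) [Group G] [MulAction G V] (a : V) {u v : V}
    (γ : Γ.Walk u v) (q : V) : Set V :=
  {w | ∃ (h : G) (e : Sym2 V), e ∈ γ.edges ∧ Sym2.map (h • ·) e = s(q, a) ∧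
    (w = h • u ∨ w = h • v)}

lemma transporter_finite {Γ : SimpleGraph V}
    (hedge : ∀ x y : V, Γ.Adj x y →
      ({g : G | (g • x = x ∧ g • y = y) ∨ (g • x = y ∧ g • y = x)} : Set G).Finite)
    {z₁ z₂ : V} (hadj : Γ.Adj z₁ z₂) (E₀ : Sym2 V) :
    {h : G | Sym2.map (h • ·) s(z₁, z₂) = E₀}.Finite := by
  rcases Set.eq_empty_or_nonempty {h : G | Sym2.map (h • ·) s(z₁, z₂) = E₀} with hS | ⟨h₀, hh₀⟩
  · rw [hS]; exact Set.finite_empty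
  · apply Set.Finite.subset ((hedge z₁ z₂ hadj).image (h₀ * ·))
    intro h hh
    simp only [Set.mem_setOf_eq, Sym2.map_pair_eq] at hh hh₀
    refine ⟨h₀⁻¹ * h, ?_, by simp [mul_inv_cancel_left]⟩
    have hEq : s(h • z₁, h • z₂) = s(h₀ • z₁, h₀ • z₂) := hh.trans hh₀.symm
    rw [Sym2.eq_iff] at hEq
    rcases hEq with ⟨h1, h2⟩ | ⟨h1, h2⟩
    · exact Or.inl ⟨by simp [mul_smul, h1], by simp [mul_smul, h2]⟩
    · exact Or.inr ⟨by simp [mul_smul, h1], by simp [mul_smul, h2]⟩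

lemma crossRel_finite {Γ : SimpleGraph V}
    (hedge : ∀ x y : V, Γ.Adj x y →
      ({g : G | (g • x = x ∧ g • y = y) ∨ (g • x = y ∧ g • y = x)} : Set G).Finite)
    (a : V) {u v : V} (γ : Γ.Walk u v) (q : V) :
    {p | crossRel Γ G a γ q p}.Finite := by
  have key : ∀ e ∈ {e : Sym2 V | e ∈ γ.edges},
      ({h : G | Sym2.map (h • ·) e = s(q, a)}).Finite := by
    intro e he
    induction e using Sym2.ind with
    | _ z₁ z₂ => exact transporter_finite hedge (γ.adj_of_mem_edges he) _
  have hsub : {p | crossRel Γ G a γ q p} ⊆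
      ⋃ e ∈ {e : Sym2 V | e ∈ γ.edges}, ⋃ h ∈ {h : G | Sym2.map (h • ·) e = s(q, a)},
        (h • ·) '' {z | z ∈ γ.support} := by
    rintro p ⟨h, e, he, hmap, ⟨z, hz, hzp⟩, -⟩
    exact Set.mem_biUnion he (Set.mem_biUnion hmap ⟨z, hz, hzp⟩)
  refine Set.Finite.subset ?_ hsub
  refine Set.Finite.biUnion γ.edges.finite_toSet fun e he => ?_
  exact Set.Finite.biUnion (key e he) fun h _ => (γ.support.finite_toSet).image _

lemma uturn_finite {Γ : SimpleGraph V}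
    (hedge : ∀ x y : V, Γ.Adj x y →
      ({g : G | (g • x = x ∧ g • y = y) ∨ (g • x = y ∧ g • y = x)} : Set G).Finite)
    (a : V) {u v : V} (γ : Γ.Walk u v) (q : V) :
    (uturnSet Γ G a γ q).Finite := by
  have key : ∀ e ∈ {e : Sym2 V | e ∈ γ.edges},
      ({h : G | Sym2.map (h • ·) e = s(q, a)}).Finite := by
    intro e he
    induction e using Sym2.ind with
    | _ z₁ z₂ => exact transporter_finite hedge (γ.adj_of_mem_edges he) _
  have hsub : uturnSet Γ G a γ q ⊆
      ⋃ e ∈ {e : Sym2 V | e ∈ γ.edges}, ⋃ h ∈ {h : G | Sym2.map (h • ·) e = s(q, a)},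
        ({h • u, h • v} : Set V) := by
    rintro w ⟨h, e, he, hmap, hw⟩
    refine Set.mem_biUnion he (Set.mem_biUnion hmap ?_)
    rcases hw with rfl | rfl
    · exact Set.mem_insert _ _
    · exact Set.mem_insert_of_mem _ rfl
  refine Set.Finite.subset ?_ hsub
  refine Set.Finite.biUnion γ.edges.finite_toSet fun e he => ?_
  exact Set.Finite.biUnion (key e he) fun h _ => (Set.finite_singleton _).insert _

def reachSet (Γ : SimpleGraph V) (G : Type*) [Group G] [MulAction G V] (a : V) {u v : V}
    (γ : Γ.Walk u v) (x₀ : V) (K : ℕ) : ℕ → Set V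
  | 0 => {x₀}
  | m + 1 => reachSet Γ G a γ x₀ K m ∪
      {p | ∃ r ∈ reachSet Γ G a γ x₀ K m, ∃ q, Γ.Adj a q ∧
        (deleteVert Γ a).edist r q ≤ (K : ℕ∞) ∧ crossRel Γ G a γ q p}

lemma reach_subset {Γ : SimpleGraph V} {a x₀ : V} {u v : V} {γ : Γ.Walk u v} {K : ℕ}
    (hx₀ : Γ.Adj a x₀) : ∀ m, reachSet Γ G a γ x₀ K m ⊆ Γ.neighborSet a := by
  intro m
  induction m with
  | zero => intro p hp; rw [reachSet, Set.mem_singleton_iff] at hp; subst hp; exact hx₀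
  | succ m ih =>
    intro p hp
    rw [reachSet] at hp
    rcases hp with hp | ⟨r, hr, q, hq, hd, ⟨h, e, he, hmap, hz, hap⟩⟩
    · exact ih hp
    · exact hap

lemma reach_mono {Γ : SimpleGraph V} {a x₀ : V} {u v : V} {γ : Γ.Walk u v} {K : ℕ}
    {m m' : ℕ} (h : m ≤ m') : reachSet Γ G a γ x₀ K m ⊆ reachSet Γ G a γ x₀ K m' := by
  induction m' with
  | zero => rw [Nat.le_zero] at h; subst h; exact le_refl _
  | succ m' ih =>
    rcases Nat.lt_or_ge m (m' + 1) with h' | h'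
    · refine (ih (Nat.lt_succ_iff.mp h')).trans ?_
      rw [reachSet]; exact Set.subset_union_left
    · have : m = m' + 1 := le_antisymm h h'
      subst this; exact le_refl _

lemma reach_finite {Γ : SimpleGraph V} {a x₀ : V} {u v : V} {γ : Γ.Walk u v} {K : ℕ}
    (hfine : FineAt Γ a)
    (hedge : ∀ x y : V, Γ.Adj x y →
      ({g : G | (g • x = x ∧ g • y = y) ∨ (g • x = y ∧ g • y = x)} : Set G).Finite)
    (hx₀ : Γ.Adj a x₀) : ∀ m, (reachSet Γ G a γ x₀ K m).Finite := by
  intro m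
  induction m with
  | zero => exact Set.finite_singleton _
  | succ m ih =>
    have hfin : (⋃ r ∈ reachSet Γ G a γ x₀ K m,
        ⋃ q ∈ {y ∈ Γ.neighborSet a | angle Γ a r y ≤ (K : ℕ∞)},
          {p | crossRel Γ G a γ q p}).Finite := by
      refine Set.Finite.biUnion ih fun r hr => ?_
      exact Set.Finite.biUnion (hfine r (reach_subset hx₀ m hr) K)
        fun q _ => crossRel_finite hedge a γ q
    rw [reachSet]
    refine ih.union (hfin.subset ?_)
    rintro p ⟨r, hr, q, hq, hd, hcr⟩
    exact Set.mem_biUnion hr (Set.mem_biUnion ⟨hq, hd⟩ hcr)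

end FineAux

namespace FineAux

variable {V : Type*} {G : Type*} [Group G] [MulAction G V]

def smulWalk (Γ : SimpleGraph V)
    (hact : ∀ (g : G) (x y : V), Γ.Adj x y → Γ.Adj (g • x) (g • y))
    (g : G) {u v : V} (γ : Γ.Walk u v) : Γ.Walk (g • u) (g • v) :=
  γ.map ⟨(g • ·), fun h => hact g _ _ h⟩

lemma smulWalk_length (Γ : SimpleGraph V) (hact : ∀ (g : G) (x y : V), Γ.Adj x y → Γ.Adj (g • x) (g • y))
    (g : G) {u v : V} (γ : Γ.Walk u v) : (smulWalk Γ hact g γ).length = γ.length := by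
  unfold smulWalk; exact SimpleGraph.Walk.length_map _ γ

lemma smulWalk_support (Γ : SimpleGraph V) (hact : ∀ (g : G) (x y : V), Γ.Adj x y → Γ.Adj (g • x) (g • y))
    (g : G) {u v : V} (γ : Γ.Walk u v) :
    (smulWalk Γ hact g γ).support = γ.support.map (g • ·) := by
  unfold smulWalk; exact SimpleGraph.Walk.support_map _ γ

lemma smulWalk_edges (Γ : SimpleGraph V) (hact : ∀ (g : G) (x y : V), Γ.Adj x y → Γ.Adj (g • x) (g • y))
    (g : G) {u v : V} (γ : Γ.Walk u v) :
    (smulWalk Γ hact g γ).edges = γ.edges.map (Sym2.map (g • ·)) := by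
  unfold smulWalk; exact SimpleGraph.Walk.edges_map _ γ

lemma cross_or_short {Γ : SimpleGraph V}
    (hact : ∀ (g : G) (x y : V), Γ.Adj x y → Γ.Adj (g • x) (g • y))
    (a : V) {u v : V} (γ : Γ.Walk u v) (g : G)
    (hu' : g • u ≠ a) (hv' : g • v ≠ a) :
    (deleteVert Γ a).edist (g • u) (g • v) ≤ (γ.length : ℕ∞) ∨
    ∃ q p, Γ.Adj a q ∧ Γ.Adj a p ∧
      (deleteVert Γ a).edist (g • u) q ≤ (γ.length : ℕ∞) ∧
      (deleteVert Γ a).edist (g • v) p ≤ (γ.length : ℕ∞) ∧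
      crossRel Γ G a γ q p ∧ crossRel Γ G a γ p q := by
  set W := smulWalk Γ hact g γ with hWdef
  by_cases ha : a ∈ W.support
  · right
    obtain ⟨q, hq1, hq2, hq3, hq4⟩ := first_hit Γ W a ha hu'
    have ha' : a ∈ W.reverse.support := by
      rwa [SimpleGraph.Walk.support_reverse, List.mem_reverse]
    obtain ⟨p, hp1, hp2, hp3, hp4⟩ := first_hit Γ W.reverse a ha' hv'
    have hp2' : s(p, a) ∈ W.edges := by
      rwa [SimpleGraph.Walk.edges_reverse, List.mem_reverse] at hp2
    have hp3' : p ∈ W.support := by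
      rwa [SimpleGraph.Walk.support_reverse, List.mem_reverse] at hp3
    have hWlen : W.length = γ.length := smulWalk_length Γ hact g γ
    have hWrevlen : W.reverse.length = γ.length := by
      rw [SimpleGraph.Walk.length_reverse, hWlen]
    -- extract crossRel data
    have hmk : ∀ {b c : V}, s(b, a) ∈ W.edges → c ∈ W.support → Γ.Adj a c →
        crossRel Γ G a γ b c := by
      intro b c hb hc hadj
      rw [hWdef, smulWalk_edges] at hb
      rw [hWdef, smulWalk_support] at hc
      obtain ⟨e, he, hmap⟩ := List.mem_map.mp hb
      obtain ⟨z, hz, hzc⟩ := List.mem_map.mp hc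
      exact ⟨g, e, he, hmap, ⟨z, hz, hzc⟩, hadj⟩
    refine ⟨q, p, hq1.symm, hp1.symm, ?_, ?_, hmk hq2 hp3' hp1.symm, hmk hp2' hq3 hq1.symm⟩
    · rw [← hWlen]; exact hq4
    · rw [← hWrevlen]; exact hp4
  · left
    have h := edist_del_le Γ a W ha
    rwa [smulWalk_length Γ hact g γ] at h

lemma near_nbr {Γ : SimpleGraph V}
    (hact : ∀ (g : G) (x y : V), Γ.Adj x y → Γ.Adj (g • x) (g • y))
    {u v : V} (huv : u ≠ v) (a x : V) (γ : Γ.Walk u v)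
    (hx : (attachOrbit Γ G u v huv).Adj a x) :
    Γ.Adj a x ∨ ∃ q, Γ.Adj a q ∧ (deleteVert Γ a).edist x q ≤ (γ.length : ℕ∞) ∧
      x ∈ uturnSet Γ G a γ q := by
  have hax : a ≠ x := hx.ne
  rcases hx with h | ⟨g, ⟨hgu, hgv⟩ | ⟨hgv, hgu⟩⟩
  · exact Or.inl h
  · -- g • u = a, g • v = x : walk from x to a is reverse of translate
    right
    set W := ((smulWalk Γ hact g γ).reverse.copy hgv hgu) with hWdef
    have haW : a ∈ W.support := W.end_mem_support
    obtain ⟨q, h1, h2, h3, h4⟩ := first_hit Γ W a haW (Ne.symm hax)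
    have hWlen : W.length = γ.length := by
      rw [hWdef, SimpleGraph.Walk.length_copy, SimpleGraph.Walk.length_reverse,
        smulWalk_length]
    refine ⟨q, h1.symm, by rw [← hWlen]; exact h4, ?_⟩
    have h2' : s(q, a) ∈ (smulWalk Γ hact g γ).edges := by
      have := h2
      rw [hWdef, SimpleGraph.Walk.edges_copy, SimpleGraph.Walk.edges_reverse,
        List.mem_reverse] at this
      exact this
    rw [smulWalk_edges] at h2'
    obtain ⟨e, he, hmap⟩ := List.mem_map.mp h2'
    exact ⟨g, e, he, hmap, Or.inr hgv.symm⟩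
  · -- g • v = a, g • u = x
    right
    set W := ((smulWalk Γ hact g γ).copy hgu hgv) with hWdef
    have haW : a ∈ W.support := W.end_mem_support
    obtain ⟨q, h1, h2, h3, h4⟩ := first_hit Γ W a haW (Ne.symm hax)
    have hWlen : W.length = γ.length := by
      rw [hWdef, SimpleGraph.Walk.length_copy, smulWalk_length]
    refine ⟨q, h1.symm, by rw [← hWlen]; exact h4, ?_⟩
    have h2' : s(q, a) ∈ (smulWalk Γ hact g γ).edges := by
      have := h2
      rw [hWdef, SimpleGraph.Walk.edges_copy] at this
      exact this
    rw [smulWalk_edges] at h2'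
    obtain ⟨e, he, hmap⟩ := List.mem_map.mp h2'
    exact ⟨g, e, he, hmap, Or.inl hgu.symm⟩

end FineAux

namespace FineAux

variable {V : Type*} {G : Type*} [Group G] [MulAction G V]

lemma core {Γ : SimpleGraph V}
    (hact : ∀ (g : G) (x y : V), Γ.Adj x y → Γ.Adj (g • x) (g • y))
    (a : V) {u v : V} (huv : u ≠ v) (γ : Γ.Walk u v) (x₀ : V) (K : ℕ) {y : V} :
    ∀ {c : V} (w : (deleteVert (attachOrbit Γ G u v huv) a).Walk c y) (m k : ℕ) (r : V),
      r ∈ reachSet Γ G a γ x₀ K m →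
      (deleteVert Γ a).edist r c ≤ (k : ℕ∞) →
      k + w.length * (γ.length + 1) + γ.length ≤ K →
      ∃ m' ≤ m + w.length, ∃ r' ∈ reachSet Γ G a γ x₀ K m',
        (deleteVert Γ a).edist r' y ≤ ((k + w.length * (γ.length + 1) : ℕ) : ℕ∞) := by
  intro c w
  induction w with
  | nil =>
    intro m k r hr hd _
    exact ⟨m, by omega, r, hr, hd.trans (by exact_mod_cast Nat.le_add_right _ _)⟩
  | @cons c c' y' hcc' w ih =>
    intro m k r hr hd hK
    set L := γ.length with hL
    have hlen : (SimpleGraph.Walk.cons hcc' w).length = w.length + 1 :=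
      SimpleGraph.Walk.length_cons _ _
    rw [hlen] at hK ⊢
    have hmul : (w.length + 1) * (L + 1) = w.length * (L + 1) + (L + 1) := by ring
    rw [hmul] at hK ⊢
    obtain ⟨hadj, hca, hc'a⟩ := hcc'
    -- helper to finish from IH results
    have finish : ∀ (k' m₀ : ℕ), k' + w.length * (L + 1) ≤ k + (w.length * (L + 1) + (L + 1)) →
        m₀ ≤ m + 1 →
        (∃ m' ≤ m₀ + w.length, ∃ r' ∈ reachSet Γ G a γ x₀ K m',
          (deleteVert Γ a).edist r' y' ≤ ((k' + w.length * (L + 1) : ℕ) : ℕ∞)) →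
        ∃ m' ≤ m + (w.length + 1), ∃ r' ∈ reachSet Γ G a γ x₀ K m',
          (deleteVert Γ a).edist r' y' ≤ ((k + (w.length * (L + 1) + (L + 1)) : ℕ) : ℕ∞) := by
      rintro k' m₀ hk' hm₀ ⟨m', hm', r', hr', hd'⟩
      exact ⟨m', by omega, r', hr', hd'.trans (by exact_mod_cast hk')⟩
    rcases hadj with hΓ | ⟨g, hg⟩
    · -- Γ-edge
      have hstep : (deleteVert Γ a).edist c c' ≤ (1 : ℕ∞) := by
        have : (deleteVert Γ a).Adj c c' := ⟨hΓ, hca, hc'a⟩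
        exact SimpleGraph.edist_le (this.toWalk)
      have hd' : (deleteVert Γ a).edist r c' ≤ ((k + 1 : ℕ) : ℕ∞) := by
        refine (SimpleGraph.edist_triangle (v := c)).trans ?_
        push_cast
        exact add_le_add hd hstep
      refine finish (k + 1) m (by nlinarith [Nat.zero_le L]) (by omega)
        (ih m (k + 1) r hr hd' (by nlinarith [Nat.zero_le (w.length * (L+1))]))
    · -- new edge
      have main : ∀ (g : G), g • u = c → g • v = c' →
          ∃ m' ≤ m + (w.length + 1), ∃ r' ∈ reachSet Γ G a γ x₀ K m',
            (deleteVert Γ a).edist r' y' ≤ ((k + (w.length * (L + 1) + (L + 1)) : ℕ) : ℕ∞) := by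
        intro g hgu hgv
        rcases cross_or_short hact a γ g (hgu ▸ hca) (hgv ▸ hc'a) with hshort |
          ⟨q, p, haq, hap, hq, hp, hqp, hpq⟩
        · rw [hgu, hgv] at hshort
          have hd' : (deleteVert Γ a).edist r c' ≤ ((k + L : ℕ) : ℕ∞) := by
            refine (SimpleGraph.edist_triangle (v := c)).trans ?_
            push_cast
            exact add_le_add hd hshort
          exact finish (k + L) m (by nlinarith) (by omega)
            (ih m (k + L) r hr hd' (by nlinarith))
        · rw [hgu] at hq
          rw [hgv] at hp
          have hrq : (deleteVert Γ a).edist r q ≤ ((k + L : ℕ) : ℕ∞) := by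
            refine (SimpleGraph.edist_triangle (v := c)).trans ?_
            push_cast
            exact add_le_add hd hq
          have hpmem : p ∈ reachSet Γ G a γ x₀ K (m + 1) := by
            rw [reachSet]
            exact Or.inr ⟨r, hr, q, haq, hrq.trans (by exact_mod_cast (by nlinarith : k + L ≤ K)), hqp⟩
          have hd'' : (deleteVert Γ a).edist p c' ≤ ((L : ℕ) : ℕ∞) := by
            rw [SimpleGraph.edist_comm]; exact hp
          exact finish L (m + 1) (by nlinarith) (by omega)
            (ih (m + 1) L p hpmem hd'' (by nlinarith))
      rcases hg with ⟨hgu, hgv⟩ | ⟨hgv, hgu⟩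
      · exact main g hgu hgv
      · -- reversed orientation: use g acting with u,v swapped via cross_or_short symmetric data
        rcases cross_or_short hact a γ g (fun h => hc'a (hgu ▸ h)) (fun h => hca (hgv ▸ h))
          with hshort | ⟨q, p, haq, hap, hq, hp, hqp, hpq⟩
        · rw [hgu] at hshort
          rw [hgv] at hshort
          have hshort' : (deleteVert Γ a).edist c c' ≤ ((L : ℕ) : ℕ∞) := by
            rw [SimpleGraph.edist_comm]; exact hshort
          have hd' : (deleteVert Γ a).edist r c' ≤ ((k + L : ℕ) : ℕ∞) := by
            refine (SimpleGraph.edist_triangle (v := c)).trans ?_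
            push_cast
            exact add_le_add hd hshort'
          exact finish (k + L) m (by nlinarith) (by omega)
            (ih m (k + L) r hr hd' (by nlinarith))
        · -- here g•v = c (near side is p), g•u = c' (far side is q)
          rw [hgv] at hp
          rw [hgu] at hq
          have hrp : (deleteVert Γ a).edist r p ≤ ((k + L : ℕ) : ℕ∞) := by
            refine (SimpleGraph.edist_triangle (v := c)).trans ?_
            push_cast
            exact add_le_add hd hp
          have hqmem : q ∈ reachSet Γ G a γ x₀ K (m + 1) := by
            rw [reachSet]
            exact Or.inr ⟨r, hr, p, hap, hrp.trans (by exact_mod_cast (by nlinarith : k + L ≤ K)), hpq⟩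
          have hd'' : (deleteVert Γ a).edist q c' ≤ ((L : ℕ) : ℕ∞) := by
            rw [SimpleGraph.edist_comm]; exact hq
          exact finish L (m + 1) (by nlinarith) (by omega)
            (ih (m + 1) L q hqmem hd'' (by nlinarith))

end FineAux

theorem statement5 {V G : Type*} [Group G] [MulAction G V] (Γ : SimpleGraph V)
    (hconn : Γ.Connected)
    (hact : ∀ (g : G) (x y : V), Γ.Adj x y → Γ.Adj (g • x) (g • y))
    (hedge : ∀ x y : V, Γ.Adj x y →
      ({g : G | (g • x = x ∧ g • y = y) ∨ (g • x = y ∧ g • y = x)} : Set G).Finite)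
    (u v : V) (huv : u ≠ v) (henew : ¬ Γ.Adj u v)
    (a : V) (hfine : FineAt Γ a) :
    FineAt (attachOrbit Γ G u v huv) a := by
  classical
  obtain ⟨γ⟩ := hconn.preconnected u v
  intro x hx n
  set L := γ.length with hL
  have hax : (attachOrbit Γ G u v huv).Adj a x := hx
  have hstart : ∃ x₀, Γ.Adj a x₀ ∧ (deleteVert Γ a).edist x₀ x ≤ (L : ℕ∞) := by
    rcases FineAux.near_nbr hact huv a x γ hax with h | ⟨q, hq, hd, -⟩
    · refine ⟨x, h, ?_⟩
      rw [SimpleGraph.edist_self]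
      exact zero_le
    · exact ⟨q, hq, by rw [SimpleGraph.edist_comm]; exact hd⟩
  obtain ⟨x₀, hx₀, hx₀x⟩ := hstart
  set K := L + n * (L + 1) + L + 1 with hKdef
  have hfin : (⋃ r' ∈ FineAux.reachSet Γ G a γ x₀ K n,
      ({y ∈ Γ.neighborSet a | angle Γ a r' y ≤ ((L + n * (L + 1) : ℕ) : ℕ∞)} ∪
       ⋃ q ∈ {q' ∈ Γ.neighborSet a | angle Γ a r' q' ≤ ((L + n * (L + 1) + L : ℕ) : ℕ∞)},
         FineAux.uturnSet Γ G a γ q)).Finite := by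
    refine Set.Finite.biUnion (FineAux.reach_finite hfine hedge hx₀ n) fun r' hr' => ?_
    have hr'' : r' ∈ Γ.neighborSet a := FineAux.reach_subset hx₀ n hr'
    refine (hfine r' hr'' _).union ?_
    exact Set.Finite.biUnion (hfine r' hr'' _) fun q _ => FineAux.uturn_finite hedge a γ q
  refine hfin.subset ?_
  rintro y ⟨hyN, hyd⟩
  have hyd' : (deleteVert (attachOrbit Γ G u v huv) a).edist x y ≤ (n : ℕ∞) := hyd
  have hne : (deleteVert (attachOrbit Γ G u v huv) a).edist x y ≠ ⊤ := by
    intro h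
    rw [h, top_le_iff] at hyd'
    exact (ENat.coe_ne_top n) hyd'
  obtain ⟨w, hw⟩ := SimpleGraph.exists_walk_of_edist_ne_top hne
  have hwn : w.length ≤ n := by
    have : (w.length : ℕ∞) ≤ (n : ℕ∞) := by rw [hw]; exact hyd'
    exact_mod_cast this
  have hx₀mem : x₀ ∈ FineAux.reachSet Γ G a γ x₀ K 0 := by
    rw [FineAux.reachSet]; exact rfl
  have harith : L + w.length * (L + 1) + L ≤ K := by
    have h1 : w.length * (L + 1) ≤ n * (L + 1) := Nat.mul_le_mul_right _ hwn
    omega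
  obtain ⟨m', hm', r', hr', hd'⟩ :=
    FineAux.core hact a huv γ x₀ K w 0 L x₀ hx₀mem hx₀x harith
  have hr'' : r' ∈ FineAux.reachSet Γ G a γ x₀ K n :=
    FineAux.reach_mono (show m' ≤ n by omega) hr'
  have hbound : (L + w.length * (L + 1) : ℕ) ≤ (L + n * (L + 1) : ℕ) := by
    have h1 : w.length * (L + 1) ≤ n * (L + 1) := Nat.mul_le_mul_right _ hwn
    omega
  have hd'' : (deleteVert Γ a).edist r' y ≤ ((L + n * (L + 1) : ℕ) : ℕ∞) :=
    hd'.trans (by exact_mod_cast hbound)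
  have hyadj : (attachOrbit Γ G u v huv).Adj a y := hyN
  rcases FineAux.near_nbr hact huv a y γ hyadj with h | ⟨q, hq, hdyq, hyU⟩
  · exact Set.mem_biUnion hr'' (Or.inl ⟨h, hd''⟩)
  · refine Set.mem_biUnion hr'' (Or.inr ?_)
    have hrq : (deleteVert Γ a).edist r' q ≤ ((L + n * (L + 1) + L : ℕ) : ℕ∞) := by
      refine (SimpleGraph.edist_triangle (v := y)).trans ?_
      push_cast
      exact add_le_add hd'' hdyq
    exact Set.mem_biUnion (⟨hq, hrq⟩ : q ∈ {q' ∈ Γ.neighborSet a |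
      angle Γ a r' q' ≤ ((L + n * (L + 1) + L : ℕ) : ℕ∞)}) hyU
end

section
/- Let Γ be a connected G-graph with finite edge stabilizers, let u, v be distinct vertices of Γ with {u,v} ∉ E(Γ), and let Γ' be the G-graph obtained from Γ by attaching the G-orbit of edges with representative {u,v}. Let a be a vertex such that Γ is fine at a, let b be a vertex with b ≠ a, and let k ≥ 1 be an integer. Then the set {x ∈ ab→(k)_{Γ'} : x ∉ T_aΓ} is finite. -/
open SimpleGraph
section Aux

variable {V : Type*} {G : Type*} [Group G] [MulAction G V]

lemma aux_edist_le_of_walk {Γ : SimpleGraph V} {a c b : V}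
    (W : Γ.Walk c b) (hW : a ∉ W.support) :
    (deleteVert Γ a).edist c b ≤ (W.length : ℕ∞) := by
  have hedges : ∀ e ∈ W.edges, e ∈ (deleteVert Γ a).edgeSet := by
    intro e he
    induction e using Sym2.ind with
    | _ x y =>
      rw [SimpleGraph.mem_edgeSet]
      exact (show Γ.Adj x y ∧ x ≠ a ∧ y ≠ a from ⟨W.adj_of_mem_edges he,
        fun h => hW (h ▸ W.fst_mem_support_of_mem_edges he),
        fun h => hW (h ▸ W.snd_mem_support_of_mem_edges he)⟩)
  calc (deleteVert Γ a).edist c b ≤ ((W.transfer _ hedges).length : ℕ∞) :=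
        SimpleGraph.edist_le _
  _ = (W.length : ℕ∞) := by rw [SimpleGraph.Walk.length_transfer]

/-- The set of neighbors of `a` admitting a walk to `b` avoiding `a` of length at most `M`. -/
def reachSet {V : Type*} (Γ : SimpleGraph V) (a b : V) (M : ℕ) : Set V :=
  {c | Γ.Adj a c ∧ ∃ W : Γ.Walk c b, a ∉ W.support ∧ W.length ≤ M}

lemma reachSet_finite {Γ : SimpleGraph V} {a : V} (hfine : FineAt Γ a) (b : V) (M : ℕ) :
    (reachSet Γ a b M).Finite := by
  rcases Set.eq_empty_or_nonempty (reachSet Γ a b M) with h | ⟨c₀, hc₀adj, W₀, hW₀, hl₀⟩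
  · simp [h]
  · apply Set.Finite.subset (hfine c₀ hc₀adj (M + M))
    rintro c ⟨hc, W, hW, hl⟩
    refine ⟨hc, ?_⟩
    have h1 : (deleteVert Γ a).edist c₀ b ≤ (M : ℕ∞) :=
      le_trans (aux_edist_le_of_walk W₀ hW₀) (by exact_mod_cast Nat.cast_le.mpr hl₀)
    have h2 : (deleteVert Γ a).edist c b ≤ (M : ℕ∞) :=
      le_trans (aux_edist_le_of_walk W hW) (by exact_mod_cast Nat.cast_le.mpr hl)
    show (deleteVert Γ a).edist c₀ c ≤ ((M + M : ℕ) : ℕ∞)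
    calc (deleteVert Γ a).edist c₀ c
        ≤ (deleteVert Γ a).edist c₀ b + (deleteVert Γ a).edist b c :=
          SimpleGraph.edist_triangle
      _ ≤ (M : ℕ∞) + (M : ℕ∞) := by
          refine add_le_add h1 ?_
          rw [SimpleGraph.edist_comm]; exact h2
      _ = ((M + M : ℕ) : ℕ∞) := by push_cast; ring

lemma stab_finite {Γ : SimpleGraph V}
    (hedge : ∀ x y : V, Γ.Adj x y →
      ({g : G | (g • x = x ∧ g • y = y) ∨ (g • x = y ∧ g • y = x)} : Set G).Finite)
    {z z' : V} (hzz : Γ.Adj z z') (a e : V) :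
    ({g : G | g • z = a ∧ g • z' = e}).Finite := by
  rcases Set.eq_empty_or_nonempty ({g : G | g • z = a ∧ g • z' = e}) with h | ⟨g₀, hg₀1, hg₀2⟩
  · simp [h]
  · apply Set.Finite.subset ((hedge z z' hzz).image (fun s => g₀ * s))
    rintro g ⟨h1, h2⟩
    refine ⟨g₀⁻¹ * g, Or.inl ⟨?_, ?_⟩, by group⟩
    · rw [mul_smul, h1, inv_smul_eq_iff]; exact hg₀1.symm
    · rw [mul_smul, h2, inv_smul_eq_iff]; exact hg₀2.symm

end Aux

section Aux2
variable {V : Type*}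

lemma exists_exit {Δ : SimpleGraph V} {a : V} :
    ∀ {x b : V} (W : Δ.Walk x b), a ∈ W.support → b ≠ a →
    ∃ (e : V) (W₂ : Δ.Walk e b), s(a, e) ∈ W.edges ∧ a ∉ W₂.support ∧ W₂.length ≤ W.length := by
  intro x b W
  induction W with
  | nil =>
    intro ha hb
    simp only [Walk.support_nil, List.mem_singleton] at ha
    exact absurd ha.symm hb
  | @cons x x₁ b h p ih =>
    intro ha hb
    by_cases hap : a ∈ p.support
    · obtain ⟨e, W₂, he, h2, h3⟩ := ih hap hb
      exact ⟨e, W₂, by rw [Walk.edges_cons]; exact List.mem_cons_of_mem _ he, h2,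
        by simp only [Walk.length_cons]; omega⟩
    · have hax : a = x := by
        simp only [Walk.support_cons, List.mem_cons] at ha
        tauto
      subst hax
      exact ⟨x₁, p, by rw [Walk.edges_cons]; exact List.mem_cons_self, hap,
        by simp only [Walk.length_cons]; omega⟩

lemma exists_prefix {Δ : SimpleGraph V} :
    ∀ {c y : V} (W : Δ.Walk c y) {x x' : V}, s(x, x') ∈ W.edges →
    ∃ (z : V) (P : Δ.Walk c z), (z = x ∨ z = x') ∧ P.length + 1 ≤ W.length ∧
      ∀ t ∈ P.support, t ∈ W.support := by
  intro c y W
  induction W with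
  | nil => intro x x' hx; simp at hx
  | @cons c c₁ y h p ih =>
    intro x x' hx
    rw [Walk.edges_cons, List.mem_cons] at hx
    rcases hx with hx | hx
    · rcases Sym2.eq_iff.mp hx with ⟨h1, h2⟩ | ⟨h1, h2⟩
      · exact ⟨c, Walk.nil, Or.inl h1.symm, by simp, by simp⟩
      · exact ⟨c, Walk.nil, Or.inr h2.symm, by simp, by simp⟩
    · obtain ⟨z, P, hz, hlen, hsup⟩ := ih hx
      refine ⟨z, Walk.cons h P, hz, by simp only [Walk.length_cons]; omega, ?_⟩
      intro t ht
      rw [Walk.support_cons, List.mem_cons] at ht ⊢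
      rcases ht with ht | ht
      · exact Or.inl ht
      · exact Or.inr (hsup t ht)

lemma exists_connect {Δ : SimpleGraph V} [DecidableEq V] {s y : V} (r : Δ.Walk s y) {x b : V}
    (hx : x ∈ r.support) (hb : b ∈ r.support) :
    ∃ W : Δ.Walk x b, W.length ≤ r.length ∧ ∀ t ∈ W.support, t ∈ r.support := by
  by_cases hbd : b ∈ (r.dropUntil x hx).support
  · refine ⟨(r.dropUntil x hx).takeUntil b hbd, ?_, ?_⟩
    · exact le_trans (Walk.length_takeUntil_le _ _) (Walk.length_dropUntil_le _ _)
    · intro t ht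
      exact Walk.support_dropUntil_subset _ _ (Walk.support_takeUntil_subset _ _ ht)
  · have hbt : b ∈ (r.takeUntil x hx).support := by
      have hspec := r.take_spec hx
      have : b ∈ ((r.takeUntil x hx).append (r.dropUntil x hx)).support := by
        rw [hspec]; exact hb
      rw [Walk.mem_support_append_iff] at this
      tauto
    refine ⟨((r.takeUntil x hx).dropUntil b hbt).reverse, ?_, ?_⟩
    · rw [Walk.length_reverse]
      exact le_trans (Walk.length_dropUntil_le _ _) (Walk.length_takeUntil_le _ _)
    · intro t ht
      rw [Walk.support_reverse, List.mem_reverse] at ht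
      exact Walk.support_takeUntil_subset _ _ (Walk.support_dropUntil_subset _ _ ht)

end Aux2

lemma expand_walk {V G : Type*} [Group G] [MulAction G V] {Γ : SimpleGraph V}
    (hact : ∀ (g : G) (x y : V), Γ.Adj x y → Γ.Adj (g • x) (g • y))
    {u v : V} (huv : u ≠ v) (q : Γ.Walk u v) (hq1 : 1 ≤ q.length) {a : V} :
    ∀ {x y : V} (W : (attachOrbit Γ G u v huv).Walk x y), a ∉ W.support →
    ∃ Wt : Γ.Walk x y, Wt.length ≤ W.length * q.length ∧
      ∀ e : V, s(a, e) ∈ Wt.edges →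
        ∃ (g : G) (z z' : V), Γ.Adj z z' ∧ z ∈ q.support ∧ z' ∈ q.support ∧
          g • z = a ∧ g • z' = e ∧ s(g • u, g • v) ∈ W.edges := by
  intro x y W
  induction W with
  | nil => intro _; exact ⟨SimpleGraph.Walk.nil, by simp, by simp⟩
  | @cons x₀ x₁ y₀ h p ih =>
    intro ha
    simp only [Walk.support_cons, List.mem_cons, not_or] at ha
    obtain ⟨hax, hap⟩ := ha
    have hax₁ : a ≠ x₁ := fun h' => hap (h' ▸ Walk.start_mem_support p)
    obtain ⟨Wtp, hWtl, hWtprop⟩ := ih hap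
    have hring : (p.length + 1) * q.length = p.length * q.length + q.length := by ring
    have h' : Γ.Adj x₀ x₁ ∨ ∃ g : G, (g • u = x₀ ∧ g • v = x₁) ∨ (g • v = x₀ ∧ g • u = x₁) := h
    rcases h' with hΓ | ⟨g, hor⟩
    · refine ⟨Walk.cons hΓ Wtp, ?_, ?_⟩
      · rw [Walk.length_cons, Walk.length_cons]; omega
      · intro e he
        rw [Walk.edges_cons, List.mem_cons] at he
        rcases he with he | he
        · rcases Sym2.eq_iff.mp he with ⟨h1, _⟩ | ⟨h1, _⟩
          · exact absurd h1 hax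
          · exact absurd h1 hax₁
        · obtain ⟨g, z, z', h1, h2, h3, h4, h5, h6⟩ := hWtprop e he
          exact ⟨g, z, z', h1, h2, h3, h4, h5,
            by rw [Walk.edges_cons]; exact List.mem_cons_of_mem _ h6⟩
    · have hmapedges : ∀ (e : V),
          s(a, e) ∈ (q.map ⟨fun t => g • t, fun hxy => hact g _ _ hxy⟩).edges →
          ∃ (z z' : V), Γ.Adj z z' ∧ z ∈ q.support ∧ z' ∈ q.support ∧
            g • z = a ∧ g • z' = e := by
        intro e he
        rw [Walk.edges_map, List.mem_map] at he
        obtain ⟨e₀, he₀, hmap⟩ := he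
        revert he₀ hmap
        induction e₀ using Sym2.ind with
        | _ z z'' =>
          intro he₀ hmap
          rw [Sym2.map_pair_eq] at hmap
          rcases Sym2.eq_iff.mp hmap with ⟨ha1, he1⟩ | ⟨ha1, he1⟩
          · exact ⟨z, z'', q.adj_of_mem_edges he₀, q.fst_mem_support_of_mem_edges he₀,
              q.snd_mem_support_of_mem_edges he₀, ha1, he1⟩
          · exact ⟨z'', z, (q.adj_of_mem_edges he₀).symm, q.snd_mem_support_of_mem_edges he₀,
              q.fst_mem_support_of_mem_edges he₀, he1, ha1⟩
      rcases hor with ⟨h1, h2⟩ | ⟨h1, h2⟩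
      · refine ⟨((q.map ⟨fun t => g • t, fun hxy => hact g _ _ hxy⟩).copy h1 h2).append Wtp,
          ?_, ?_⟩
        · rw [Walk.length_append, Walk.length_copy, Walk.length_map, Walk.length_cons]; omega
        · intro e he
          rw [Walk.edges_append, Walk.edges_copy, List.mem_append] at he
          rcases he with he | he
          · obtain ⟨z, z', hh1, hh2, hh3, hh4, hh5⟩ := hmapedges e he
            exact ⟨g, z, z', hh1, hh2, hh3, hh4, hh5,
              by rw [h1, h2, Walk.edges_cons]; exact List.mem_cons_self⟩
          · obtain ⟨g', z, z', hh1, hh2, hh3, hh4, hh5, hh6⟩ := hWtprop e he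
            exact ⟨g', z, z', hh1, hh2, hh3, hh4, hh5,
              by rw [Walk.edges_cons]; exact List.mem_cons_of_mem _ hh6⟩
      · refine ⟨(((q.map ⟨fun t => g • t, fun hxy => hact g _ _ hxy⟩).reverse).copy h1 h2).append
          Wtp, ?_, ?_⟩
        · rw [Walk.length_append, Walk.length_copy, Walk.length_reverse, Walk.length_map,
            Walk.length_cons]
          omega
        · intro e he
          rw [Walk.edges_append, Walk.edges_copy, Walk.edges_reverse, List.mem_append,
            List.mem_reverse] at he
          rcases he with he | he
          · obtain ⟨z, z', hh1, hh2, hh3, hh4, hh5⟩ := hmapedges e he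
            refine ⟨g, z, z', hh1, hh2, hh3, hh4, hh5, ?_⟩
            rw [h1, h2, Sym2.eq_swap, Walk.edges_cons]
            exact List.mem_cons_self
          · obtain ⟨g', z, z', hh1, hh2, hh3, hh4, hh5, hh6⟩ := hWtprop e he
            exact ⟨g', z, z', hh1, hh2, hh3, hh4, hh5,
              by rw [Walk.edges_cons]; exact List.mem_cons_of_mem _ hh6⟩

lemma newNeighbor_finite {V G : Type*} [Group G] [MulAction G V] {Γ : SimpleGraph V} {a : V}
    (hfine : FineAt Γ a)
    (hedge : ∀ x y : V, Γ.Adj x y →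
      ({g : G | (g • x = x ∧ g • y = y) ∨ (g • x = y ∧ g • y = x)} : Set G).Finite)
    (hact : ∀ (g : G) (x y : V), Γ.Adj x y → Γ.Adj (g • x) (g • y))
    {u' v' : V} (q : Γ.Walk u' v') (hq : q.IsPath) (hq1 : 1 ≤ q.length) (b : V) (M : ℕ) :
    ({c | ∃ g : G, g • u' = a ∧ g • v' = c ∧
      ∃ Wt : Γ.Walk c b, a ∉ Wt.support ∧ Wt.length ≤ M}).Finite := by
  cases q with
  | nil => simp at hq1
  | @cons _ w₁ _ h₁ qt =>
    rw [Walk.cons_isPath_iff] at hq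
    obtain ⟨hqt, hu'⟩ := hq
    apply Set.Finite.subset (Set.Finite.biUnion (reachSet_finite hfine b (qt.length + M))
      (fun c'' _ => Set.Finite.image (fun g : G => g • v') (stab_finite hedge h₁ a c'')))
    rintro c ⟨g, hg1, hg2, Wt, hWa, hWl⟩
    refine Set.mem_biUnion (show g • w₁ ∈ reachSet Γ a b (qt.length + M) from ?_)
      ⟨g, ⟨hg1, rfl⟩, hg2⟩
    constructor
    · have := hact g u' w₁ h₁
      rwa [hg1] at this
    · refine ⟨((qt.map ⟨fun t => g • t, fun hxy => hact g _ _ hxy⟩).copy rfl hg2).append Wt,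
        ?_, ?_⟩
      · intro hmem
        rw [Walk.mem_support_append_iff] at hmem
        rcases hmem with hmem | hmem
        · rw [Walk.support_copy, Walk.support_map, List.mem_map] at hmem
          obtain ⟨t, ht, hgt⟩ := hmem
          have ht' : t = u' := smul_left_cancel g (hgt.trans hg1.symm)
          exact hu' (ht' ▸ ht)
        · exact hWa hmem
      · rw [Walk.length_append, Walk.length_copy, Walk.length_map]
        omega

lemma qset_finite {V G : Type*} [Group G] [MulAction G V] {Γ : SimpleGraph V}
    (hact : ∀ (g : G) (x y : V), Γ.Adj x y → Γ.Adj (g • x) (g • y))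
    (hedge : ∀ x y : V, Γ.Adj x y →
      ({g : G | (g • x = x ∧ g • y = y) ∨ (g • x = y ∧ g • y = x)} : Set G).Finite)
    {u v : V} (huv : u ≠ v) {a : V} (hfine : FineAt Γ a)
    (q : Γ.Walk u v) (hq : q.IsPath) (hq1 : 1 ≤ q.length) :
    ∀ (m : ℕ) (b : V),
      ({c | (attachOrbit Γ G u v huv).Adj a c ∧
        ∃ W : (attachOrbit Γ G u v huv).Walk c b, a ∉ W.support ∧ W.length ≤ m}).Finite := by
  intro m
  induction m with
  | zero =>
    intro b
    apply Set.Finite.subset (Set.finite_singleton b)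
    rintro c ⟨_, W, _, hWl⟩
    rw [Set.mem_singleton_iff]
    exact Walk.eq_of_length_eq_zero (Nat.le_zero.mp hWl)
  | succ m ih =>
    intro b
    set L := q.length with hL
    set E := reachSet Γ a b ((m + 1) * L) with hE
    set Gfin := {g : G | ∃ e ∈ E, ∃ z z', Γ.Adj z z' ∧ z ∈ q.support ∧ z' ∈ q.support ∧
      g • z = a ∧ g • z' = e} with hGfin
    have piece : ∀ (z z' e : V), ({g : G | Γ.Adj z z' ∧ g • z = a ∧ g • z' = e}).Finite := by
      intro z z' e
      by_cases hzz : Γ.Adj z z'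
      · exact (stab_finite hedge hzz a e).subset (fun g hg => ⟨hg.2.1, hg.2.2⟩)
      · have : {g : G | Γ.Adj z z' ∧ g • z = a ∧ g • z' = e} = ∅ := by
          ext g; simp [hzz]
        rw [this]; exact Set.finite_empty
    have hGfinF : Gfin.Finite := by
      apply Set.Finite.subset (Set.Finite.biUnion (reachSet_finite hfine b ((m + 1) * L))
        (fun e _ => Set.Finite.biUnion (List.finite_toSet q.support)
          (fun z _ => Set.Finite.biUnion (List.finite_toSet q.support)
            (fun z' _ => piece z z' e))))
      rintro g ⟨e, he, z, z', h1, h2, h3, h4, h5⟩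
      exact Set.mem_biUnion he (Set.mem_biUnion h2 (Set.mem_biUnion h3 ⟨h1, h4, h5⟩))
    have hTfin : (((fun g : G => g • u) '' Gfin) ∪ ((fun g : G => g • v) '' Gfin)).Finite :=
      (hGfinF.image _).union (hGfinF.image _)
    apply Set.Finite.subset
      (((reachSet_finite hfine b ((m + 1) * L)).union
        ((newNeighbor_finite hfine hedge hact q hq hq1 b ((m + 1) * L)).union
          (newNeighbor_finite hfine hedge hact q.reverse hq.reverse
            (by rw [Walk.length_reverse]; exact hq1) b ((m + 1) * L)))).union
        (Set.Finite.biUnion hTfin (fun w _ => ih w)))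
    rintro c ⟨hadj, W, hWa, hWl⟩
    obtain ⟨Wt, hWtl, hprop⟩ := expand_walk hact huv q hq1 W hWa
    have hWtl' : Wt.length ≤ (m + 1) * L :=
      le_trans hWtl (Nat.mul_le_mul_right L hWl)
    by_cases haWt : a ∈ Wt.support
    · have hbne : b ≠ a := fun h => hWa (h ▸ W.end_mem_support)
      obtain ⟨e, W₂, hedgemem, hW₂a, hW₂l⟩ := exists_exit Wt haWt hbne
      obtain ⟨g, z, z', hzz, hzs, hz's, hgz, hgz', hmemW⟩ := hprop e hedgemem
      have heE : e ∈ E := by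
        refine ⟨?_, W₂, hW₂a, le_trans hW₂l hWtl'⟩
        have := hact g z z' hzz
        rwa [hgz, hgz'] at this
      obtain ⟨z₀, P, hz₀, hPl, hPs⟩ := exists_prefix W hmemW
      have hgG : g ∈ Gfin := ⟨e, heE, z, z', hzz, hzs, hz's, hgz, hgz'⟩
      have hz₀T : z₀ ∈ ((fun g : G => g • u) '' Gfin) ∪ ((fun g : G => g • v) '' Gfin) := by
        rcases hz₀ with h | h
        · exact Or.inl ⟨g, hgG, h.symm⟩
        · exact Or.inr ⟨g, hgG, h.symm⟩
      exact Or.inr (Set.mem_biUnion hz₀T ⟨hadj, P, fun hQ => hWa (hPs a hQ), by omega⟩)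
    · refine Or.inl ?_
      have h' : Γ.Adj a c ∨ ∃ g : G, (g • u = a ∧ g • v = c) ∨ (g • v = a ∧ g • u = c) := hadj
      rcases h' with hΓ | ⟨g, ⟨h1, h2⟩ | ⟨h1, h2⟩⟩
      · exact Or.inl ⟨hΓ, Wt, haWt, hWtl'⟩
      · exact Or.inr (Or.inl ⟨g, h1, h2, Wt, haWt, hWtl'⟩)
      · exact Or.inr (Or.inr ⟨g, h1, h2, Wt, haWt, hWtl'⟩)


theorem statement6 {V G : Type*} [Group G] [MulAction G V] (Γ : SimpleGraph V)
    (hconn : Γ.Connected)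
    (hact : ∀ (g : G) (x y : V), Γ.Adj x y → Γ.Adj (g • x) (g • y))
    (hedge : ∀ x y : V, Γ.Adj x y →
      ({g : G | (g • x = x ∧ g • y = y) ∨ (g • x = y ∧ g • y = x)} : Set G).Finite)
    (u v : V) (huv : u ≠ v) (henew : ¬ Γ.Adj u v)
    (a : V) (hfine : FineAt Γ a) (b : V) (hba : b ≠ a) (k : ℕ) (hk : 1 ≤ k) :
    ({x : V | x ∈ escSet (attachOrbit Γ G u v huv) a b k ∧ x ∉ Γ.neighborSet a}).Finite := by
  classical
  obtain ⟨w0⟩ := hconn.preconnected u v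
  obtain ⟨q, hq⟩ := w0.toPath
  have hq1 : 1 ≤ q.length := by
    rcases Nat.eq_zero_or_pos q.length with h0 | h0
    · exact absurd (Walk.eq_of_length_eq_zero h0) huv
    · omega
  apply Set.Finite.subset (qset_finite hact hedge huv hfine q hq hq1 k b)
  rintro x ⟨⟨hxnb, x', p, hpl, hbmem, hamem, hxmem⟩, -⟩
  have hadj : (attachOrbit Γ G u v huv).Adj a x := hxnb
  refine ⟨hadj, ?_⟩
  cases p with
  | nil => simp [Walk.support_nil] at hbmem
  | cons h p₂ =>
    have hsupp : (Walk.cons h p₂).support.tail = p₂.support := by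
      rw [Walk.support_cons, List.tail_cons]
    rw [hsupp] at hbmem hamem
    have hxmem' : x ∈ p₂.support := by
      rw [Walk.support_cons, List.mem_cons] at hxmem
      rcases hxmem with h' | h'
      · exact absurd h'.symm hadj.ne
      · exact h'
    obtain ⟨W, hWl, hWs⟩ := exists_connect p₂ hxmem' hbmem
    refine ⟨W, fun hQ => hamem (hWs a hQ), ?_⟩
    rw [Walk.length_cons] at hpl
    omega
end

section
/- Let Γ be a G-graph, let u, v be distinct vertices of Γ with {u,v} ∉ E(Γ), and let Γ' be the G-graph obtained from Γ by attaching the G-orbit of edges with representative {u,v}. If a is a vertex such that the set T_aΓ of neighbors of a in Γ has finitely many orbits under the stabilizer G_a, then T_aΓ' has finitely many G_a-orbits. -/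
open SimpleGraph
theorem statement8 {V G : Type*} [Group G] [MulAction G V] (Γ : SimpleGraph V)
    (hact : ∀ (g : G) (x y : V), Γ.Adj x y → Γ.Adj (g • x) (g • y))
    (u v : V) (huv : u ≠ v) (henew : ¬ Γ.Adj u v) (a : V)
    (hfinorb : ∃ F : Set V, F.Finite ∧ ∀ w ∈ Γ.neighborSet a,
        ∃ x ∈ F, ∃ g : G, g • a = a ∧ g • x = w) :
    ∃ F : Set V, F.Finite ∧ ∀ w ∈ (attachOrbit Γ G u v huv).neighborSet a,
        ∃ x ∈ F, ∃ g : G, g • a = a ∧ g • x = w := by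
  classical
  obtain ⟨F, hFfin, hF⟩ := hfinorb
  have key : ∀ (p q : V), (∃ g : G, g • p = a) →
      ∃ x : V, ∀ g : G, g • p = a → ∃ g' : G, g' • a = a ∧ g' • x = g • q := by
    rintro p q ⟨g₀, hg₀⟩
    refine ⟨g₀ • q, fun g hg => ⟨g * g₀⁻¹, ?_, ?_⟩⟩
    · rw [mul_smul, ← hg₀, inv_smul_smul, hg, hg₀]
    · rw [mul_smul, inv_smul_smul]
  by_cases h1 : ∃ g : G, g • u = a
  · obtain ⟨x₁, hx₁⟩ := key u v h1
    by_cases h2 : ∃ g : G, g • v = a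
    · obtain ⟨x₂, hx₂⟩ := key v u h2
      refine ⟨insert x₁ (insert x₂ F), (hFfin.insert _).insert _, ?_⟩
      rintro w (hw | ⟨g, ⟨hgu, hgv⟩ | ⟨hgv, hgu⟩⟩)
      · obtain ⟨x, hxF, g, hga, hgx⟩ := hF w hw
        exact ⟨x, by simp [hxF], g, hga, hgx⟩
      · obtain ⟨g', hg'a, hg'⟩ := hx₁ g hgu
        exact ⟨x₁, by simp, g', hg'a, hg'.trans hgv⟩
      · obtain ⟨g', hg'a, hg'⟩ := hx₂ g hgv
        exact ⟨x₂, by simp, g', hg'a, hg'.trans hgu⟩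
    · refine ⟨insert x₁ F, hFfin.insert _, ?_⟩
      rintro w (hw | ⟨g, ⟨hgu, hgv⟩ | ⟨hgv, hgu⟩⟩)
      · obtain ⟨x, hxF, g, hga, hgx⟩ := hF w hw
        exact ⟨x, by simp [hxF], g, hga, hgx⟩
      · obtain ⟨g', hg'a, hg'⟩ := hx₁ g hgu
        exact ⟨x₁, by simp, g', hg'a, hg'.trans hgv⟩
      · exact absurd ⟨g, hgv⟩ h2
  · by_cases h2 : ∃ g : G, g • v = a
    · obtain ⟨x₂, hx₂⟩ := key v u h2
      refine ⟨insert x₂ F, hFfin.insert _, ?_⟩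
      rintro w (hw | ⟨g, ⟨hgu, hgv⟩ | ⟨hgv, hgu⟩⟩)
      · obtain ⟨x, hxF, g, hga, hgx⟩ := hF w hw
        exact ⟨x, by simp [hxF], g, hga, hgx⟩
      · exact absurd ⟨g, hgu⟩ h1
      · obtain ⟨g', hg'a, hg'⟩ := hx₂ g hgv
        exact ⟨x₂, by simp, g', hg'a, hg'.trans hgu⟩
    · refine ⟨F, hFfin, ?_⟩
      rintro w (hw | ⟨g, ⟨hgu, hgv⟩ | ⟨hgv, hgu⟩⟩)
      · exact hF w hw
      · exact absurd ⟨g, hgu⟩ h1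
      · exact absurd ⟨g, hgv⟩ h2
end

section
/- Under the standing setup (Γ a connected G-graph with finite edge stabilizers; v_0 a vertex with G_{v_0} = H; u_0, …, u_ℓ vertices with finite G-stabilizers such that every vertex of Γ lies in the G-orbit of v_0 or of some u_i, every edge of Γ has at least one endpoint in the G-orbit of some u_i, {u_0, v_0} ∈ E(Γ), and {u_0, u_j} ∈ E(Γ) for all 1 ≤ j ≤ ℓ; X = {g ∈ G : dist_Γ(u_i, g·u_j) = 1 or dist_Γ(u_i, g·v_0) = 1 for some 0 ≤ i, j ≤ ℓ}; and q the vertex map of Γ̂(G,H,X) given by q(g) = g·u_0 and q(gH) = g·v_0), for all vertices a, b of Γ̂(G,H,X) one has dist_Γ(q(a), q(b)) ≤ 3·dist_{Γ̂(G,H,X)}(a,b). -/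
open SimpleGraph
/-- The coned-off Cayley graph `Γ̂(G,H,X)`: vertices are `G ⊔ G/H`; distinct `g, g'` in `G`
are adjacent iff `g⁻¹g' ∈ (X ∪ X⁻¹) \ {1}`, and `g` is adjacent to the cone vertex `gH`. -/
def conedOff (G : Type*) [Group G] (H : Subgroup G) (X : Set G) :
    SimpleGraph (G ⊕ (G ⧸ H)) where
  Adj a b :=
    match a, b with
    | Sum.inl g, Sum.inl g' => g ≠ g' ∧ (g⁻¹ * g' ∈ X ∨ g'⁻¹ * g ∈ X)
    | Sum.inl g, Sum.inr c => (g : G ⧸ H) = c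
    | Sum.inr c, Sum.inl g => (g : G ⧸ H) = c
    | Sum.inr _, Sum.inr _ => False
  symm := ⟨by
    rintro (g | c) (g' | c') h
    · exact ⟨fun e => h.1 e.symm, h.2.symm⟩
    · exact h
    · exact h
    · exact h⟩
  loopless := ⟨by
    rintro (g | c) h
    · exact h.1 rfl
    · exact h⟩

/-- The Cayley graph of `G` with respect to a set `S`, viewed as a simple graph. -/
def cayley (G : Type*) [Group G] (S : Set G) : SimpleGraph G where
  Adj g g' := g ≠ g' ∧ (g⁻¹ * g' ∈ S ∨ g'⁻¹ * g ∈ S)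
  symm := ⟨fun g g' h => ⟨fun e => h.1 e.symm, h.2.symm⟩⟩
  loopless := ⟨fun g h => h.1 rfl⟩

section Aux

variable {V G : Type*} [Group G] [MulAction G V]

private lemma aux_dist_smul_le (Γ : SimpleGraph V) (hconn : Γ.Connected)
    (hact : ∀ (g : G) (x y : V), Γ.Adj x y → Γ.Adj (g • x) (g • y))
    (g : G) (x y : V) : Γ.dist (g • x) (g • y) ≤ Γ.dist x y := by
  obtain ⟨p, hp⟩ := hconn.exists_walk_length_eq_dist x y
  let f : Γ →g Γ := ⟨fun z => g • z, fun {a b} h => hact g a b h⟩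
  calc Γ.dist (g • x) (g • y) ≤ (p.map f).length := SimpleGraph.dist_le _
    _ = Γ.dist x y := by rw [SimpleGraph.Walk.length_map, hp]

private lemma aux_dist_smul (Γ : SimpleGraph V) (hconn : Γ.Connected)
    (hact : ∀ (g : G) (x y : V), Γ.Adj x y → Γ.Adj (g • x) (g • y))
    (g : G) (x y : V) : Γ.dist (g • x) (g • y) = Γ.dist x y := by
  refine le_antisymm (aux_dist_smul_le Γ hconn hact g x y) ?_
  have := aux_dist_smul_le Γ hconn hact g⁻¹ (g • x) (g • y)
  simpa using this

/-- left translation as a graph hom of the coned-off Cayley graph -/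
private def auxTrans (G : Type*) [Group G] (H : Subgroup G) (X : Set G) (a : G) :
    conedOff G H X →g conedOff G H X where
  toFun z := match z with
    | Sum.inl g => Sum.inl (a * g)
    | Sum.inr c => Sum.inr (a • c)
  map_rel' := by
    rintro (g | c) (g' | c') h
    · refine ⟨fun e => h.1 (mul_left_cancel e), ?_⟩
      have : (a * g)⁻¹ * (a * g') = g⁻¹ * g' := by group
      have h2 : (a * g')⁻¹ * (a * g) = g'⁻¹ * g := by group
      rw [show ((a*g)⁻¹ * (a*g') : G) = g⁻¹ * g' by group,
        show ((a*g')⁻¹ * (a*g) : G) = g'⁻¹ * g by group]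
      exact h.2
    · show ((a * g : G) : G ⧸ H) = a • c'
      have h' : ((g : G) : G ⧸ H) = c' := h
      rw [← h']
      exact (MulAction.Quotient.smul_mk H a g).symm
    · show ((a * g' : G) : G ⧸ H) = a • c
      have h' : ((g' : G) : G ⧸ H) = c := h
      rw [← h']
      exact (MulAction.Quotient.smul_mk H a g').symm
    · exact h.elim

end Aux

theorem statement14 {V G : Type*} [Group G] [MulAction G V] (Γ : SimpleGraph V)
    (hconn : Γ.Connected)
    (hact : ∀ (g : G) (x y : V), Γ.Adj x y → Γ.Adj (g • x) (g • y))
    (hedge : ∀ x y : V, Γ.Adj x y →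
      ({g : G | (g • x = x ∧ g • y = y) ∨ (g • x = y ∧ g • y = x)} : Set G).Finite)
    (H : Subgroup G) (v0 : V) (hv0 : MulAction.stabilizer G v0 = H)
    (ℓ : ℕ) (u : Fin (ℓ + 1) → V)
    (hufin : ∀ i, ({g : G | g • u i = u i} : Set G).Finite)
    (hvert : ∀ x : V, (∃ g : G, g • v0 = x) ∨ ∃ g : G, ∃ i, g • u i = x)
    (hedgecover : ∀ x y : V, Γ.Adj x y →
      (∃ g : G, ∃ i, g • u i = x) ∨ (∃ g : G, ∃ i, g • u i = y))
    (h0 : Γ.Adj (u 0) v0)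
    (hj : ∀ j : Fin (ℓ + 1), j ≠ 0 → Γ.Adj (u 0) (u j))
    (X : Set G)
    (hX : X = {g : G | ∃ i j, Γ.dist (u i) (g • u j) = 1 ∨ Γ.dist (u i) (g • v0) = 1})
    (q : (G ⊕ (G ⧸ H)) → V)
    (hq1 : ∀ g : G, q (Sum.inl g) = g • u 0)
    (hq2 : ∀ g : G, q (Sum.inr (QuotientGroup.mk g)) = g • v0) :
    ∀ a b : G ⊕ (G ⧸ H),
      Γ.dist (q a) (q b) ≤ 3 * (conedOff G H X).dist a b := by
  have hds : ∀ (g : G) (x y : V), Γ.dist (g • x) (g • y) = Γ.dist x y :=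
    aux_dist_smul Γ hconn hact
  have hu0 : ∀ i, Γ.dist (u 0) (u i) ≤ 1 := by
    intro i
    by_cases hi : i = 0
    · subst hi
      rw [SimpleGraph.dist_self]
      exact Nat.zero_le 1
    · exact le_of_eq (SimpleGraph.dist_eq_one_iff_adj.2 (hj i hi))
  have memX1 : ∀ (s : G) (i j : Fin (ℓ + 1)), Γ.Adj (u i) (s • u j) → s ∈ X := by
    intro s i j h
    rw [hX]
    exact ⟨i, j, Or.inl (SimpleGraph.dist_eq_one_iff_adj.2 h)⟩
  have memX2 : ∀ (s : G) (i : Fin (ℓ + 1)), Γ.Adj (u i) (s • v0) → s ∈ X := by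
    intro s i h
    rw [hX]
    exact ⟨i, i, Or.inr (SimpleGraph.dist_eq_one_iff_adj.2 h)⟩
  have memX0 : ∀ (s : G) (i : Fin (ℓ + 1)), s • u i = v0 → s ∈ X := by
    intro s i h
    rw [hX]
    refine ⟨0, i, Or.inl ?_⟩
    rw [h]
    exact SimpleGraph.dist_eq_one_iff_adj.2 h0
  have memX0' : ∀ (s : G) (j : Fin (ℓ + 1)), s • u 0 = u j → s ∈ X := by
    intro s j h
    by_cases hjj : j = 0
    · rw [hX]
      refine ⟨0, 0, Or.inr ?_⟩
      subst hjj
      have hA : Γ.Adj (s • u 0) (s • v0) := hact s _ _ h0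
      rw [h] at hA
      exact SimpleGraph.dist_eq_one_iff_adj.2 hA
    · rw [hX]
      refine ⟨0, 0, Or.inl ?_⟩
      rw [h]
      exact SimpleGraph.dist_eq_one_iff_adj.2 (hj j hjj)
  -- the subgroup generated by X ∪ H
  set K : Subgroup G := Subgroup.closure (X ∪ (H : Set G)) with hK
  have hXK : ∀ s ∈ X, s ∈ K := fun s hs =>
    Subgroup.subset_closure (Set.mem_union_left _ hs)
  set S : Set V := {x | ∃ k, k ∈ K ∧ ((∃ j, k • u j = x) ∨ k • v0 = x)} with hS
  have hSadj : ∀ x y : V, x ∈ S → Γ.Adj x y → y ∈ S := by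
    intro x y hx hxy
    obtain ⟨k, hk, hcase⟩ := hx
    have step : ∀ (k : G) (j : Fin (ℓ + 1)), k ∈ K → k • u j = x → y ∈ S := by
      intro k j hk hkx
      rcases hvert y with ⟨g, hg⟩ | ⟨g, i, hg⟩
      · have hA : Γ.Adj (u j) ((k⁻¹ * g) • v0) := by
          have := hact k⁻¹ x y hxy
          rw [← hkx, ← hg] at this
          simpa [smul_smul] using this
        refine ⟨g, ?_, Or.inr hg⟩
        have he : g = k * (k⁻¹ * g) := by group
        rw [he]
        exact mul_mem hk (hXK _ (memX2 _ _ hA))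
      · have hA : Γ.Adj (u j) ((k⁻¹ * g) • u i) := by
          have := hact k⁻¹ x y hxy
          rw [← hkx, ← hg] at this
          simpa [smul_smul] using this
        refine ⟨g, ?_, Or.inl ⟨i, hg⟩⟩
        have he : g = k * (k⁻¹ * g) := by group
        rw [he]
        exact mul_mem hk (hXK _ (memX1 _ _ _ hA))
    rcases hcase with ⟨j, hkx⟩ | hkx
    · exact step k j hk hkx
    · rcases hedgecover x y hxy with ⟨g, i, hg⟩ | ⟨g, i, hg⟩
      · have hs : (k⁻¹ * g) • u i = v0 := by
          rw [mul_smul, hg, ← hkx]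
          simp
        have hgK : g ∈ K := by
          have he : g = k * (k⁻¹ * g) := by group
          rw [he]
          exact mul_mem hk (hXK _ (memX0 _ _ hs))
        exact step g i hgK hg
      · have hA : Γ.Adj (u i) ((g⁻¹ * k) • v0) := by
          have := hact g⁻¹ y x hxy.symm
          rw [← hg, ← hkx] at this
          simpa [smul_smul] using this
        refine ⟨g, ?_, Or.inl ⟨i, hg⟩⟩
        have he : g = k * (g⁻¹ * k)⁻¹ := by group
        rw [he]
        exact mul_mem hk (inv_mem (hXK _ (memX2 _ _ hA)))
  have hSwalk : ∀ (a b : V) (p : Γ.Walk a b), a ∈ S → b ∈ S := by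
    intro a b p
    induction p with
    | nil => exact id
    | cons h p ih => intro ha; exact ih (hSadj _ _ ha h)
  have hSuniv : ∀ x : V, x ∈ S := by
    intro x
    exact hSwalk v0 x (hconn v0 x).some ⟨1, one_mem K, Or.inr (one_smul _ _)⟩
  have hKtop : ∀ g : G, g ∈ K := by
    intro g
    obtain ⟨k, hk, hcase⟩ := hSuniv (g • u 0)
    rcases hcase with ⟨j, hkj⟩ | hkv
    · have hs : (k⁻¹ * g) • u 0 = u j := by
        rw [mul_smul, ← hkj]
        simp
      have he : g = k * (k⁻¹ * g) := by group
      rw [he]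
      exact mul_mem hk (hXK _ (memX0' _ _ hs))
    · have hs : (k⁻¹ * g) • u 0 = v0 := by
        rw [mul_smul, ← hkv]
        simp
      have he : g = k * (k⁻¹ * g) := by group
      rw [he]
      exact mul_mem hk (hXK _ (memX0 _ _ hs))
  -- reachability in the coned-off graph
  have hR : ∀ g : G, (conedOff G H X).Reachable (Sum.inl 1) (Sum.inl g) := by
    intro g
    have hmem := hKtop g
    rw [hK] at hmem
    induction hmem using Subgroup.closure_induction with
    | mem s hs =>
      rcases hs with hs | hs
      · by_cases h1 : s = (1 : G)
        · rw [h1]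
        · refine SimpleGraph.Adj.reachable ?_
          exact ⟨fun e => h1 e.symm, Or.inl (by simpa using hs)⟩
      · have a1 : (conedOff G H X).Adj (Sum.inl (1 : G)) (Sum.inr ((1 : G) : G ⧸ H)) := rfl
        have a2 : (conedOff G H X).Adj (Sum.inr ((1 : G) : G ⧸ H)) (Sum.inl s) := by
          show ((s : G) : G ⧸ H) = ((1 : G) : G ⧸ H)
          rw [QuotientGroup.eq]
          simpa using inv_mem hs
        exact a1.reachable.trans a2.reachable
    | one => rfl
    | mul a b _ _ iha ihb =>
      refine iha.trans ?_
      have h2 : (conedOff G H X).Reachable (Sum.inl (a * 1)) (Sum.inl (a * b)) :=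
        ihb.map (auxTrans G H X a)
      rwa [mul_one] at h2
    | inv a _ iha =>
      have h2 : (conedOff G H X).Reachable (Sum.inl (a⁻¹ * 1)) (Sum.inl (a⁻¹ * a)) :=
        iha.map (auxTrans G H X a⁻¹)
      rw [mul_one, inv_mul_cancel] at h2
      exact h2.symm
  have hPreconn : (conedOff G H X).Preconnected := by
    have hto1 : ∀ z : G ⊕ (G ⧸ H), (conedOff G H X).Reachable z (Sum.inl (1 : G)) := by
      rintro (g | c)
      · exact (hR g).symm
      · obtain ⟨g, rfl⟩ := QuotientGroup.mk_surjective c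
        have a1 : (conedOff G H X).Adj (Sum.inr ((g : G) : G ⧸ H)) (Sum.inl g) := rfl
        exact a1.reachable.trans (hR g).symm
    intro z w
    exact (hto1 z).trans (hto1 w).symm
  -- bound for a single edge
  have coreX : ∀ s ∈ X, Γ.dist (u 0) (s • u 0) ≤ 3 := by
    intro s hs
    rw [hX] at hs
    obtain ⟨i, j, h1 | h2⟩ := hs
    · calc Γ.dist (u 0) (s • u 0)
          ≤ Γ.dist (u 0) (u i) + Γ.dist (u i) (s • u 0) := hconn.dist_triangle
        _ ≤ Γ.dist (u 0) (u i) + (Γ.dist (u i) (s • u j) + Γ.dist (s • u j) (s • u 0)) :=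
            by exact Nat.add_le_add_left hconn.dist_triangle _
        _ ≤ 1 + (1 + 1) := by
            refine Nat.add_le_add (hu0 i) (Nat.add_le_add (le_of_eq h1) ?_)
            rw [hds, SimpleGraph.dist_comm]
            exact hu0 j
        _ = 3 := rfl
    · calc Γ.dist (u 0) (s • u 0)
          ≤ Γ.dist (u 0) (u i) + Γ.dist (u i) (s • u 0) := hconn.dist_triangle
        _ ≤ Γ.dist (u 0) (u i) + (Γ.dist (u i) (s • v0) + Γ.dist (s • v0) (s • u 0)) :=
            by exact Nat.add_le_add_left hconn.dist_triangle _
        _ ≤ 1 + (1 + 1) := by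
            refine Nat.add_le_add (hu0 i) (Nat.add_le_add (le_of_eq h2) ?_)
            rw [hds, SimpleGraph.dist_comm]
            exact le_of_eq (SimpleGraph.dist_eq_one_iff_adj.2 h0)
        _ = 3 := rfl
  have hedgebound : ∀ z w, (conedOff G H X).Adj z w → Γ.dist (q z) (q w) ≤ 3 := by
    rintro (g | c) (g' | c') h
    · rw [hq1, hq1]
      rcases h.2 with hx | hx
      · have : Γ.dist (g • u 0) (g' • u 0) = Γ.dist (u 0) ((g⁻¹ * g') • u 0) := by
          rw [← hds g (u 0) ((g⁻¹ * g') • u 0), smul_smul]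
          congr 1
          group
        rw [this]
        exact coreX _ hx
      · have : Γ.dist (g • u 0) (g' • u 0) = Γ.dist (u 0) ((g'⁻¹ * g) • u 0) := by
          rw [SimpleGraph.dist_comm, ← hds g' (u 0) ((g'⁻¹ * g) • u 0), smul_smul]
          congr 1
          group
        rw [this]
        exact coreX _ hx
    · have h' : ((g : G) : G ⧸ H) = c' := h
      rw [hq1, ← h', hq2]
      have : Γ.dist (g • u 0) (g • v0) = 1 :=
        SimpleGraph.dist_eq_one_iff_adj.2 (hact g _ _ h0)
      omega
    · have h' : ((g' : G) : G ⧸ H) = c := h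
      rw [hq1, ← h', hq2]
      have : Γ.dist (g' • v0) (g' • u 0) = 1 := by
        rw [SimpleGraph.dist_comm]
        exact SimpleGraph.dist_eq_one_iff_adj.2 (hact g' _ _ h0)
      omega
    · exact h.elim
  have hwalkbound : ∀ (a b : G ⊕ (G ⧸ H)) (p : (conedOff G H X).Walk a b),
      Γ.dist (q a) (q b) ≤ 3 * p.length := by
    intro a b p
    induction p with
    | nil => simp
    | @cons x y z h' p ih =>
      have t : Γ.dist (q x) (q z) ≤ Γ.dist (q x) (q y) + Γ.dist (q y) (q z) :=
        hconn.dist_triangle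
      have e1 := hedgebound _ _ h'
      rw [SimpleGraph.Walk.length_cons]
      omega
  intro a b
  obtain ⟨p, hp⟩ := (hPreconn a b).exists_walk_length_eq_dist
  rw [← hp]
  exact hwalkbound a b p
end
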